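/- arXiv:2111.15287 — 2 statements merged into one kernel-verified Lean document; each statement's English description precedes it below -/
import Mathlib

section
/- Let k ≥ 4 be an even integer, p a prime and ε ∈ {+1, −1}. Define a(n) = σ_{k−1}(n) + ε·p^{k/2}·σ_{k−1}(n/p) for n ≥ 1, where σ_{k−1}(n/p) = 0 if p ∤ n. Then for every n ≥ 1: if p ∤ n, then a(np) = (1 + p^{k−1} + ε·p^{k/2})·a(n); and if p ∣ n, then a(np) = (1 + p^{k−1} + ε·p^{k/2})·a(n) − ε·σ_{k−1}(n/p)·p^{k/2}·(ε + p^{k/2})·(ε + p^{k/2−1}). -/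
/-- `mySigma m n = ∑_{d ∣ n} d^m`, the sum of `m`-th powers of the divisors of `n`. -/
def mySigma (m n : ℕ) : ℕ := ∑ d ∈ n.divisors, d ^ m

/-- `frak k p ε n = σ_{k-1}(n) + ε p^{k/2} σ_{k-1}(n/p)`, where the last term is `0`
if `p ∤ n`. -/
def frak (k p : ℕ) (ε : ℤ) (n : ℕ) : ℤ :=
  (mySigma (k - 1) n : ℤ) +
    ε * (p : ℤ) ^ (k / 2) * (if p ∣ n then (mySigma (k - 1) (n / p) : ℤ) else 0)

open ArithmeticFunction in
lemma mySigma_eq (m n : ℕ) : mySigma m n = ArithmeticFunction.sigma m n := by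
  rw [sigma_apply]; rfl

open ArithmeticFunction in
lemma mySigma_mul (m : ℕ) {a b : ℕ} (h : Nat.Coprime a b) :
    mySigma m (a * b) = mySigma m a * mySigma m b := by
  simp only [mySigma_eq]
  exact isMultiplicative_sigma.map_mul_of_coprime h

open ArithmeticFunction in
lemma mySigma_prime_pow (m : ℕ) {p : ℕ} (hp : p.Prime) (i : ℕ) :
    mySigma m (p ^ i) = ∑ j ∈ Finset.range (i + 1), p ^ (j * m) := by
  rw [mySigma_eq, sigma_apply_prime_pow hp]

lemma sigma_pp_rec (m : ℕ) {p : ℕ} (hp : p.Prime) (b : ℕ) :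
    (mySigma m (p ^ (b + 2)) : ℤ) + (p : ℤ) ^ m * mySigma m (p ^ b)
      = (1 + (p : ℤ) ^ m) * mySigma m (p ^ (b + 1)) := by
  simp only [mySigma_prime_pow m hp]
  push_cast
  rw [Finset.sum_range_succ (n := b + 2), Finset.sum_range_succ (n := b + 1)]
  rw [show (b+2)*m = m + (b+1)*m by ring, pow_add]
  ring

/-- The key recursion for `mySigma` when `p ∣ n`. -/
lemma sigma_rec (m : ℕ) {p n : ℕ} (hp : p.Prime) (hn : 0 < n) (hd : p ∣ n) :
    (mySigma m (n * p) : ℤ) + (p : ℤ) ^ m * mySigma m (n / p)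
      = (1 + (p : ℤ) ^ m) * mySigma m n := by
  have key : ∃ b u, ¬ p ∣ u ∧ n = p ^ (b + 1) * u := by
    refine ⟨n.factorization p - 1, n / p ^ n.factorization p,
      Nat.not_dvd_ordCompl hp hn.ne', ?_⟩
    rw [Nat.sub_add_cancel (hp.factorization_pos_of_dvd hn.ne' hd)]
    exact (Nat.ordProj_mul_ordCompl_eq_self n p).symm
  obtain ⟨b, u, hpu, rfl⟩ := key
  have hcop : ∀ j : ℕ, Nat.Coprime (p ^ j) u :=
    fun j => Nat.Coprime.pow_left _ ((Nat.Prime.coprime_iff_not_dvd hp).mpr hpu)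
  have h1 : p ^ (b + 1) * u * p = p ^ (b + 2) * u := by ring
  have h2 : p ^ (b + 1) * u / p = p ^ b * u := by
    rw [pow_succ, mul_comm (p ^ b) p, mul_assoc, Nat.mul_div_cancel_left _ hp.pos]
  rw [h1, h2, mySigma_mul _ (hcop _), mySigma_mul _ (hcop _), mySigma_mul _ (hcop _)]
  push_cast
  have := sigma_pp_rec m hp b
  nlinarith [this, sq_nonneg ((mySigma m u : ℤ))]

theorem stmt6 (k p : ℕ) (hk : 4 ≤ k) (hke : Even k) (hp : p.Prime)
    (ε : ℤ) (hε : ε = 1 ∨ ε = -1) :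
    ∀ n : ℕ, 0 < n →
      (¬ p ∣ n →
        frak k p ε (n * p) =
          (1 + (p : ℤ) ^ (k - 1) + ε * (p : ℤ) ^ (k / 2)) * frak k p ε n) ∧
      (p ∣ n →
        frak k p ε (n * p) =
          (1 + (p : ℤ) ^ (k - 1) + ε * (p : ℤ) ^ (k / 2)) * frak k p ε n
            - ε * (mySigma (k - 1) (n / p) : ℤ) * (p : ℤ) ^ (k / 2) *
              (ε + (p : ℤ) ^ (k / 2)) * (ε + (p : ℤ) ^ (k / 2 - 1))) := by
  intro n hn
  obtain ⟨s, hs⟩ := hke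
  have hs2 : 2 ≤ s := by omega
  have hdvd : p ∣ n * p := dvd_mul_left p n
  have hnp : (n * p) / p = n := by
    rw [Nat.mul_div_assoc _ dvd_rfl, Nat.div_self hp.pos, mul_one]
  have hε2 : ε * ε = 1 := by rcases hε with rfl | rfl <;> norm_num
  -- exponent rewrites
  have e1 : (p : ℤ) ^ (k - 1) = ((p:ℤ) ^ (s - 1))^2 * p := by
    rw [← pow_mul, ← pow_succ]; congr 1; omega
  have e2 : (p : ℤ) ^ (k / 2) = (p:ℤ) ^ (s - 1) * p := by
    rw [← pow_succ]; congr 1; omega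
  have e3 : k / 2 - 1 = s - 1 := by omega
  constructor
  · intro hnd
    have hcop : Nat.Coprime n p :=
      Nat.Coprime.symm ((Nat.Prime.coprime_iff_not_dvd hp).mpr hnd)
    have hmul : (mySigma (k-1) (n * p) : ℤ) = (1 + (p:ℤ)^(k-1)) * mySigma (k-1) n := by
      rw [mySigma_mul _ hcop]
      have : mySigma (k-1) p = 1 + p ^ (k-1) := by
        rw [mySigma_eq, ← pow_one p, ArithmeticFunction.sigma_apply_prime_pow hp]
        simp [Finset.sum_range_succ]
      rw [this]; push_cast; ring
    simp only [frak, if_pos hdvd, if_neg hnd, hnp, hmul]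
    ring
  · intro hd
    have hrec := sigma_rec (k - 1) hp hn hd
    simp only [frak, if_pos hdvd, if_pos hd, hnp, e3]
    rw [show (mySigma (k-1) (n*p) : ℤ)
        = (1 + (p : ℤ) ^ (k-1)) * mySigma (k-1) n
          - (p : ℤ) ^ (k-1) * mySigma (k-1) (n / p) by linarith]
    rw [e1, e2]
    rcases hε with rfl | rfl <;> ring
end

section
/- Let p be a prime and α ≥ 1 an integer. Then 1 + (240p³ − 504p²)·α·(p² + p³)·B_{10α}·(1 + p^{5α}) / (20α·(p² + p³)^α) ≠ 0, where the expression is computed in the rational numbers. -/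
open Real Nat

lemma geo_bound : ∀ k : ℕ, 5 ≤ k → (2 * π : ℝ) ^ (2 * k) ≤ 200 * (2 * k)! := by
  intro k hk
  induction k, hk using Nat.le_induction with
  | base =>
    have hπ : π ≤ 3.15 := Real.pi_lt_d2.le
    have h1 : (2 * π : ℝ) ^ (2 * 5) ≤ 6.3 ^ (2 * 5) := by
      apply pow_le_pow_left₀ (by positivity) (by linarith)
    have h2 : ((2 * 5)! : ℝ) = 3628800 := by norm_num [Nat.factorial]
    norm_num at h1 ⊢
    linarith
  | succ k hk ih =>
    have hπ : π ≤ 3.15 := Real.pi_lt_d2.le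
    have hfac : ((2 * (k + 1))! : ℝ) = (2 * k + 2) * ((2 * k + 1) * (2 * k)!) := by
      have : 2 * (k + 1) = (2 * k + 1) + 1 := by ring
      rw [this, Nat.factorial_succ, Nat.factorial_succ]
      push_cast; ring
    have hpow : (2 * π : ℝ) ^ (2 * (k + 1)) = (2 * π) ^ (2 * k) * (2 * π) ^ 2 := by
      rw [← pow_add]; ring_nf
    have hsq : (2 * π : ℝ) ^ 2 ≤ 40 := by nlinarith [Real.pi_gt_three]
    have hfk : (1 : ℝ) ≤ (2 * k)! := by exact_mod_cast Nat.one_le_iff_ne_zero.mpr (Nat.factorial_ne_zero _)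
    have hk11 : (11 : ℝ) ≤ 2 * (k : ℝ) + 1 := by exact_mod_cast by omega
    have t1 : (2 * π : ℝ) ^ (2 * k) * (2 * π) ^ 2 ≤ (200 * (2 * k)!) * 40 :=
      mul_le_mul ih hsq (by positivity) (by positivity)
    have hprod : (40 : ℝ) ≤ (2 * (k : ℝ) + 2) * (2 * (k : ℝ) + 1) := by nlinarith
    have t2 : (200 * ((2 * k)! : ℝ)) * 40 ≤ 200 * ((2 * k + 2) * ((2 * k + 1) * (2 * k)!)) := by
      nlinarith [mul_le_mul_of_nonneg_right hprod (le_trans zero_le_one hfk)]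
    rw [hpow, hfac]
    linarith

lemma bern_bound (k : ℕ) (hk : 5 ≤ k) :
    (1 : ℝ) / 100 ≤ (-1 : ℝ) ^ (k + 1) * (bernoulli (2 * k) : ℝ) := by
  have hk0 : k ≠ 0 := by omega
  have hs := hasSum_zeta_nat hk0
  have h1 : (1 : ℝ) ≤ (-1 : ℝ) ^ (k + 1) * (2 : ℝ) ^ (2 * k - 1) * π ^ (2 * k) *
      bernoulli (2 * k) / (2 * k)! := by
    have := le_hasSum hs 1 (fun i _ => by positivity)
    simpa using this
  have hfac : (0 : ℝ) < (2 * k)! := by positivity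
  have h2 : ((2 * k)! : ℝ) ≤ (-1 : ℝ) ^ (k + 1) * (2 : ℝ) ^ (2 * k - 1) * π ^ (2 * k) *
      bernoulli (2 * k) := by
    have := (le_div_iff₀ hfac).mp h1
    linarith
  have hgeo := geo_bound k hk
  have hc : (2 : ℝ) ^ (2 * k - 1) * π ^ (2 * k) ≤ 100 * (2 * k)! := by
    have h2k : (2 : ℝ) * 2 ^ (2 * k - 1) = 2 ^ (2 * k) := by
      rw [← _root_.pow_succ']
      congr 1
      omega
    have hmp : (2 * π : ℝ) ^ (2 * k) = 2 * (2 ^ (2 * k - 1) * π ^ (2 * k)) := by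
      rw [mul_pow, ← h2k]; ring
    linarith [hgeo, hmp.symm.le, hmp.le]
  set s : ℝ := (-1 : ℝ) ^ (k + 1) * (bernoulli (2 * k) : ℝ) with hsdef
  have h3 : ((2 * k)! : ℝ) ≤ (2 : ℝ) ^ (2 * k - 1) * π ^ (2 * k) * s := by
    rw [hsdef]; nlinarith [h2]
  have hcpos : (0 : ℝ) < (2 : ℝ) ^ (2 * k - 1) * π ^ (2 * k) := by positivity
  have hs0 : 0 < s := by
    by_contra hns
    push_neg at hns
    nlinarith [mul_nonpos_of_nonneg_of_nonpos hcpos.le hns, h3, hfac]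
  have h4 := mul_le_mul_of_nonneg_right hc hs0.le
  nlinarith [h3, h4, hfac]

set_option maxHeartbeats 1000000 in
theorem stmt17 (p : ℕ) (hp : p.Prime) (α : ℕ) (hα : 1 ≤ α) :
    (1 : ℚ) + (240 * (p : ℚ) ^ 3 - 504 * (p : ℚ) ^ 2) * (α : ℚ) * ((p : ℚ) ^ 2 + (p : ℚ) ^ 3) *
        bernoulli (10 * α) * (1 + (p : ℚ) ^ (5 * α)) /
        (20 * (α : ℚ) * ((p : ℚ) ^ 2 + (p : ℚ) ^ 3) ^ α)
      ≠ 0 := by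
  -- bernoulli bound, transferred to ℚ
  have hb' := bern_bound (5 * α) (by omega)
  have h10 : 2 * (5 * α) = 10 * α := by ring
  rw [h10] at hb'
  have hsign : (-1 : ℝ) ^ (5 * α + 1) = (-1 : ℝ) ^ (α + 1) := by
    rcases Nat.even_or_odd α with ⟨m, rfl⟩ | ⟨m, rfl⟩
    · have h1 : Odd (5 * (m + m) + 1) := ⟨5 * m, by ring⟩
      have h2 : Odd ((m + m) + 1) := ⟨m, by ring⟩
      rw [h1.neg_one_pow, h2.neg_one_pow]
    · have h1 : Even (5 * (2 * m + 1) + 1) := ⟨5 * m + 3, by ring⟩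
      have h2 : Even ((2 * m + 1) + 1) := ⟨m + 1, by ring⟩
      rw [h1.neg_one_pow, h2.neg_one_pow]
  rw [hsign] at hb'
  have hcast : (((-1 : ℚ) ^ (α + 1) * bernoulli (10 * α) : ℚ) : ℝ)
      = (-1 : ℝ) ^ (α + 1) * ((bernoulli (10 * α) : ℚ) : ℝ) := by push_cast; ring
  have hbq : (1 : ℚ) / 100 ≤ (-1 : ℚ) ^ (α + 1) * bernoulli (10 * α) := by
    rw [← Rat.cast_le (K := ℝ), hcast]
    simpa using hb'
  set q : ℚ := (p : ℚ) with hqdef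
  set b : ℚ := bernoulli (10 * α) with hbdef
  have hq2 : (2 : ℚ) ≤ q := by rw [hqdef]; exact_mod_cast hp.two_le
  have hα1 : (1 : ℚ) ≤ (α : ℚ) := by exact_mod_cast hα
  have hαpos : (0 : ℚ) < (α : ℚ) := by linarith
  have hqpos : (0 : ℚ) < q := by linarith
  have hqq : 2 * q ≤ q * q := mul_le_mul_of_nonneg_right hq2 (by linarith)
  have hq4 : (4 : ℚ) ≤ q ^ 2 := by nlinarith [hqq]
  have hq8 : (8 : ℚ) ≤ q ^ 3 := by nlinarith [hqq, hq4, mul_le_mul_of_nonneg_right hq4 hqpos.le]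
  have h12 : (12 : ℚ) ≤ q ^ 2 + q ^ 3 := by linarith
  have hden1 : (0 : ℚ) < q ^ 2 + q ^ 3 := by positivity
  have hD : (0 : ℚ) < 20 * (α : ℚ) * (q ^ 2 + q ^ 3) ^ α := by positivity
  intro h
  have hN : (240 * q ^ 3 - 504 * q ^ 2) * (α : ℚ) * (q ^ 2 + q ^ 3) * b * (1 + q ^ (5 * α))
      = -(20 * (α : ℚ) * (q ^ 2 + q ^ 3) ^ α) := by
    have h2 : (240 * q ^ 3 - 504 * q ^ 2) * (α : ℚ) * (q ^ 2 + q ^ 3) * b * (1 + q ^ (5 * α)) /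
        (20 * (α : ℚ) * (q ^ 2 + q ^ 3) ^ α) = -1 := by linarith
    rw [div_eq_iff hD.ne'] at h2
    linarith
  set u : ℚ := q ^ α with hudef
  have hupos : (0 : ℚ) < u := by positivity
  have hu2 : (2 : ℚ) ≤ u := by
    calc (2 : ℚ) ≤ q := hq2
    _ = q ^ 1 := (pow_one q).symm
    _ ≤ q ^ α := pow_le_pow_right₀ (by linarith) hα
  have hz : q ^ (5 * α) = u ^ 5 := by rw [hudef, ← pow_mul, mul_comm]
  have hw : (q ^ 2 + q ^ 3) ^ α ≤ u ^ 4 := by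
    calc (q ^ 2 + q ^ 3) ^ α ≤ (q ^ 4) ^ α := by
          apply pow_le_pow_left₀ (by positivity)
          have hx : (0 : ℚ) ≤ q ^ 2 * (q ^ 2 - q - 1) :=
            mul_nonneg (by positivity) (by nlinarith [hqq])
          linarith [hx]
    _ = u ^ 4 := by rw [hudef, ← pow_mul, ← pow_mul, mul_comm]
  have hp23 : p = 2 ∨ 3 ≤ p := by have := hp.two_le; omega
  -- dichotomy on the sign of A * b
  have hdich : 0 < (240 * q ^ 3 - 504 * q ^ 2) * b ∨
      (240 * q ^ 3 - 504 * q ^ 2) * b ≤ -(24 * q ^ 2) * (1 / 100) := by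
    rcases Nat.even_or_odd α with hev | hod
    · -- Even α : b ≤ -1/100
      have hodd : Odd (α + 1) := Even.add_one hev
      rw [hodd.neg_one_pow] at hbq
      have hble : b ≤ -(1 / 100) := by linarith
      rcases hp23 with h2 | h3
      · left
        have hq' : q = 2 := by rw [hqdef, h2]; norm_num
        rw [hq']
        norm_num
        linarith
      · right
        have hq3 : (3 : ℚ) ≤ q := by rw [hqdef]; exact_mod_cast h3
        have hA0 : (0 : ℚ) ≤ q ^ 2 * (240 * q - 528) :=
          mul_nonneg (by positivity) (by linarith)
        have hA : 24 * q ^ 2 ≤ 240 * q ^ 3 - 504 * q ^ 2 := by linarith [hA0]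
        have hApos : 0 < 240 * q ^ 3 - 504 * q ^ 2 := by linarith [hA, hq4]
        have t := mul_le_mul_of_nonneg_left hble hApos.le
        linarith [t, hA]
    · -- Odd α : 1/100 ≤ b
      have heven : Even (α + 1) := Odd.add_one hod
      rw [heven.neg_one_pow, one_mul] at hbq
      rcases hp23 with h2 | h3
      · right
        have hq' : q = 2 := by rw [hqdef, h2]; norm_num
        rw [hq']
        norm_num
        linarith
      · left
        have hq3 : (3 : ℚ) ≤ q := by rw [hqdef]; exact_mod_cast h3
        have hA0 : (0 : ℚ) ≤ q ^ 2 * (240 * q - 528) :=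
          mul_nonneg (by positivity) (by linarith)
        have hApos : 0 < 240 * q ^ 3 - 504 * q ^ 2 := by linarith [hA0, hq4]
        exact mul_pos hApos (by linarith)
  rcases hdich with hpos | hneg
  · -- numerator positive, but equals a negative number
    have h1 : (0 : ℚ) < (α : ℚ) * (q ^ 2 + q ^ 3) * (1 + q ^ (5 * α)) := by positivity
    have hNpos : 0 < (240 * q ^ 3 - 504 * q ^ 2) * (α : ℚ) * (q ^ 2 + q ^ 3) * b *
        (1 + q ^ (5 * α)) := by
      have h2 := mul_pos hpos h1
      linarith [h2]
    linarith [hN, hD]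
  · -- magnitude too large
    have hPpos : (0 : ℚ) < (α : ℚ) * (q ^ 2 + q ^ 3) * (1 + q ^ (5 * α)) := by positivity
    have hP : (α : ℚ) * 12 * u ^ 5 ≤ (α : ℚ) * (q ^ 2 + q ^ 3) * (1 + q ^ (5 * α)) := by
      rw [hz]
      have t1 : 12 * u ^ 5 ≤ (q ^ 2 + q ^ 3) * (1 + u ^ 5) :=
        mul_le_mul h12 (by linarith [pow_pos hupos 5]) (by positivity) (by linarith)
      have t2 := mul_le_mul_of_nonneg_left t1 hαpos.le
      linarith [t2]
    have s2 : (240 * q ^ 3 - 504 * q ^ 2) * b * ((α : ℚ) * (q ^ 2 + q ^ 3) * (1 + q ^ (5 * α)))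
        ≤ (-(24 * q ^ 2) * (1 / 100)) * ((α : ℚ) * (q ^ 2 + q ^ 3) * (1 + q ^ (5 * α))) :=
      mul_le_mul_of_nonneg_right hneg hPpos.le
    have s3 : (-(24 * q ^ 2) * (1 / 100)) * ((α : ℚ) * (q ^ 2 + q ^ 3) * (1 + q ^ (5 * α)))
        ≤ (-(24 * q ^ 2) * (1 / 100)) * ((α : ℚ) * 12 * u ^ 5) := by
      apply mul_le_mul_of_nonpos_left hP
      linarith [hq4]
    have hu5 : 2 * u ^ 4 ≤ u ^ 5 := by
      have := mul_le_mul_of_nonneg_right hu2 (pow_pos hupos 4).le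
      calc 2 * u ^ 4 ≤ u * u ^ 4 := this
      _ = u ^ 5 := by ring
    have hu5α : (α : ℚ) * (2 * u ^ 4) ≤ (α : ℚ) * u ^ 5 :=
      mul_le_mul_of_nonneg_left hu5 hαpos.le
    have hDle : 20 * (α : ℚ) * (q ^ 2 + q ^ 3) ^ α ≤ 20 * (α : ℚ) * u ^ 4 := by
      have := mul_le_mul_of_nonneg_left hw (by positivity : (0 : ℚ) ≤ 20 * (α : ℚ))
      linarith [this]
    have hαu4 : (0 : ℚ) < (α : ℚ) * u ^ 4 := by positivity
    have f4 := mul_le_mul_of_nonneg_left hq4 (by positivity : (0 : ℚ) ≤ (α : ℚ) * u ^ 5)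
    linarith [hN, s2, s3, hu5α, hDle, hαu4, f4]
end
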